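/- For every prime p ≠ 5, p divides gcd(ℓ(p), F_{ℓ(p)}) exactly to the first power, i.e., p divides gcd(ℓ(p), F_{ℓ(p)}) but p² does not, where ℓ(p) = p·z(p). -/

import Mathlib

/-- Rank of appearance of `n` in the Fibonacci sequence. -/
noncomputable def zf (n : ℕ) : ℕ := sInf {k | 0 < k ∧ n ∣ Nat.fib k}

noncomputable def ellf (n : ℕ) : ℕ := Nat.lcm n (zf n)

def gf (n : ℕ) : ℕ := Nat.gcd n (Nat.fib n)

def Afib : Set ℕ := {m | ∃ n : ℕ, 0 < n ∧ gf n = m}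

section Aux

open Matrix

variable (p : ℕ) [hp : Fact p.Prime]

/-- The Fibonacci matrix over `ZMod p`. -/
private def Qm : Matrix (Fin 2) (Fin 2) (ZMod p) := !![1, 1; 1, 0]

private lemma Qm_pow (n : ℕ) : Qm p ^ (n + 1) =
    !![(Nat.fib (n + 2) : ZMod p), (Nat.fib (n + 1) : ZMod p);
       (Nat.fib (n + 1) : ZMod p), (Nat.fib n : ZMod p)] := by
  induction n with
  | zero => simp [Qm]
  | succ k ih =>
    rw [pow_succ, ih, Qm, Matrix.mul_fin_two]
    have h1 : Nat.fib (k + 3) = Nat.fib (k + 1) + Nat.fib (k + 2) := Nat.fib_add_two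
    have h2 : Nat.fib (k + 2) = Nat.fib k + Nat.fib (k + 1) := Nat.fib_add_two
    congr 1 <;> push_cast [h1, h2] <;> ring

/-- The Fibonacci matrix as a unit. -/
private def Qu : (Matrix (Fin 2) (Fin 2) (ZMod p))ˣ where
  val := Qm p
  inv := !![0, 1; 1, -1]
  val_inv := by simp [Qm, Matrix.mul_fin_two, Matrix.one_fin_two]
  inv_val := by simp [Qm, Matrix.mul_fin_two, Matrix.one_fin_two]

private lemma fib_dvd_of_pow_eq_one {k : ℕ} (hk : 0 < k) (h : Qm p ^ k = 1) :
    p ∣ Nat.fib k := by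
  obtain ⟨n, rfl⟩ : ∃ n, k = n + 1 := ⟨k - 1, by omega⟩
  rw [Qm_pow, Matrix.one_fin_two, ← Matrix.ext_iff] at h
  have := h 0 1
  simp at this
  exact (ZMod.natCast_eq_zero_iff _ _).mp this

private lemma Qm_pow_orderOf : Qm p ^ orderOf (Qu p) = 1 := by
  have := congrArg Units.val (pow_orderOf_eq_one (Qu p))
  simp only [Units.val_pow_eq_pow_val, Units.val_one] at this
  exact this

private lemma fib_dvd_orderOf : p ∣ Nat.fib (orderOf (Qu p)) :=
  fib_dvd_of_pow_eq_one p (orderOf_pos (Qu p)) (Qm_pow_orderOf p)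

private lemma zf_mem : 0 < zf p ∧ p ∣ Nat.fib (zf p) := by
  have hne : {k | 0 < k ∧ p ∣ Nat.fib k}.Nonempty :=
    ⟨orderOf (Qu p), orderOf_pos (Qu p), fib_dvd_orderOf p⟩
  exact Nat.sInf_mem hne

private lemma zf_dvd {m : ℕ} (hm : 0 < m) (h : p ∣ Nat.fib m) : zf p ∣ m := by
  obtain ⟨hzpos, hzdvd⟩ := zf_mem p
  have hdpos : 0 < Nat.gcd (zf p) m := Nat.gcd_pos_of_pos_left _ hzpos
  have hpd : p ∣ Nat.fib (Nat.gcd (zf p) m) := by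
    rw [Nat.fib_gcd]
    exact Nat.dvd_gcd hzdvd h
  have hle : zf p ≤ Nat.gcd (zf p) m := Nat.sInf_le ⟨hdpos, hpd⟩
  have hle' : Nat.gcd (zf p) m ≤ zf p := Nat.le_of_dvd hzpos (Nat.gcd_dvd_left _ _)
  have hdz : Nat.gcd (zf p) m = zf p := le_antisymm hle' hle
  rw [← hdz]
  exact Nat.gcd_dvd_right _ _

private lemma five_ne_zero (hp5 : p ≠ 5) : (5 : ZMod p) ≠ 0 := by
  intro h
  have : ((5 : ℕ) : ZMod p) = 0 := by push_cast; exact h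
  rw [ZMod.natCast_eq_zero_iff] at this
  exact hp5 ((Nat.prime_dvd_prime_iff_eq hp.out (by norm_num)).mp this)

private lemma not_p_dvd_zf (hp5 : p ≠ 5) : ¬ p ∣ zf p := by
  set t := orderOf (Qu p) with ht
  have htpos : 0 < t := orderOf_pos (Qu p)
  have hzt : zf p ∣ t := zf_dvd p htpos (fib_dvd_orderOf p)
  suffices hpt : ¬ p ∣ t by
    intro hpz; exact hpt (hpz.trans hzt)
  rintro ⟨s, hs⟩
  have hp2 : 2 ≤ p := hp.out.two_le
  have hspos : 0 < s := by
    rcases Nat.eq_zero_or_pos s with h | h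
    · rw [h, Nat.mul_zero] at hs; omega
    · exact h
  have hslt : s < t := by
    calc s = 1 * s := (one_mul s).symm
    _ < p * s := (Nat.mul_lt_mul_right hspos).mpr (by omega)
    _ = t := hs.symm
  obtain ⟨s', rfl⟩ : ∃ s', s = s' + 1 := ⟨s - 1, by omega⟩
  set a : ZMod p := (Nat.fib (s' + 2) : ZMod p) with ha
  set b : ZMod p := (Nat.fib (s' + 1) : ZMod p) with hb
  set c : ZMod p := (Nat.fib s' : ZMod p) with hc
  have hQs : Qm p ^ (s' + 1) = !![a, b; b, c] := Qm_pow p s'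
  set N : Matrix (Fin 2) (Fin 2) (ZMod p) := !![a - 1, b; b, c - 1] with hNdef
  have hNeq : Qm p ^ (s' + 1) - 1 = N := by
    rw [hQs, Matrix.one_fin_two, hNdef]
    ext i j
    fin_cases i <;> fin_cases j <;> simp
  have hNp : N ^ p = 0 := by
    rw [← hNeq, sub_pow_char_of_commute _ (Commute.one_right _), one_pow, ← pow_mul,
      mul_comm (s' + 1) p, ← hs, Qm_pow_orderOf, sub_self]
  have hdetN : N.det = 0 := by
    have h0 : N.det ^ p = 0 := by
      rw [← Matrix.det_pow, hNp, Matrix.det_zero]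
    exact pow_eq_zero_iff hp.out.ne_zero |>.mp h0
  have hdet' : (a - 1) * (c - 1) - b * b = 0 := by
    have := hdetN
    rwa [hNdef, Matrix.det_fin_two_of] at this
  have hN2 : N * N = ((a - 1) + (c - 1)) • N := by
    rw [hNdef, Matrix.mul_fin_two]
    ext i j
    fin_cases i <;> fin_cases j <;>
      simp [Matrix.smul_apply, smul_eq_mul] <;> first | ring1 | linear_combination -hdet'
  have hNk : ∀ k, N ^ (k + 1) = ((a - 1) + (c - 1)) ^ k • N := by
    intro k
    induction k with
    | zero => simp
    | succ k ih =>
      rw [pow_succ, ih, smul_mul_assoc, hN2, smul_smul, pow_succ]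
  have hN0 : N = 0 := by
    rcases eq_or_ne ((a - 1) + (c - 1)) 0 with hτ | hτ
    · have hNN : N * N = 0 := by rw [hN2, hτ, zero_smul]
      have hacz : a - b - c = 0 := by
        have : Nat.fib (s' + 2) = Nat.fib s' + Nat.fib (s' + 1) := Nat.fib_add_two
        rw [ha, hb, hc, this]
        push_cast
        ring
      have h00 : (a - 1) * (a - 1) + b * b = 0 := by
        rw [hNdef, Matrix.mul_fin_two, ← Matrix.ext_iff] at hNN
        have := hNN 0 0
        simpa using this
      have h5 : (5 : ZMod p) * ((a - 1) * (a - 1)) = 0 := by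
        linear_combination h00 + (b + 2 * (a - 1)) * hacz + (b + 2 * (a - 1)) * hτ
      have he : a - 1 = 0 := by
        rcases mul_eq_zero.mp h5 with h | h
        · exact absurd h (five_ne_zero p hp5)
        · exact mul_self_eq_zero.mp h
      have hcz : c - 1 = 0 := by linear_combination hτ - he
      have hbz : b = 0 := by linear_combination -hacz + he - hcz
      rw [hNdef, he, hbz, hcz]
      ext i j
      fin_cases i <;> fin_cases j <;> simp
    · have h1 : N ^ p = ((a - 1) + (c - 1)) ^ (p - 1) • N := by
        have := hNk (p - 1)
        rwa [Nat.sub_add_cancel (by omega)] at this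
      have h2 : ((a - 1) + (c - 1)) ^ (p - 1) • N = 0 := by rw [← h1, hNp]
      rcases smul_eq_zero.mp h2 with h | h
      · exact absurd (pow_eq_zero_iff (by omega) |>.mp h) hτ
      · exact h
  have hQs1 : Qm p ^ (s' + 1) = 1 := by
    have := hNeq
    rw [hN0, sub_eq_zero] at this
    exact this
  have hus : Qu p ^ (s' + 1) = 1 := Units.ext (by simpa [Qu] using hQs1)
  have : t ≤ s' + 1 := orderOf_le_of_pow_eq_one hspos hus
  omega

end Aux

theorem stmt19 (p : ℕ) (hp : p.Prime) (hp5 : p ≠ 5) :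
    p ∣ gf (ellf p) ∧ ¬ p ^ 2 ∣ gf (ellf p) := by
  haveI : Fact p.Prime := ⟨hp⟩
  obtain ⟨hzpos, hzdvd⟩ := zf_mem p
  have hz_l : zf p ∣ ellf p := Nat.dvd_lcm_right _ _
  have hp_l : p ∣ ellf p := Nat.dvd_lcm_left _ _
  have hfib : p ∣ Nat.fib (ellf p) := hzdvd.trans (Nat.fib_dvd _ _ hz_l)
  constructor
  · exact Nat.dvd_gcd hp_l hfib
  · intro h
    have h1 : p ^ 2 ∣ ellf p := h.trans (Nat.gcd_dvd_left _ _)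
    have hcop : Nat.Coprime p (zf p) :=
      (Nat.Prime.coprime_iff_not_dvd hp).mpr (not_p_dvd_zf p hp5)
    rw [ellf, hcop.lcm_eq_mul, pow_two] at h1
    have hdvd : p ∣ zf p := (Nat.mul_dvd_mul_iff_left hp.pos).mp h1
    exact not_p_dvd_zf p hp5 hdvd
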